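/- Let n, m ≥ 1 be integers, let ℓ, ℓ' ≥ 1 be real numbers, and let x ∈ ℝⁿ be a vector with m ≥ ‖x‖₀·ℓ·ℓ'. Let h : [n] → [m] be a uniformly random function. Then Pr[ ‖x‖₀ ≥ ‖f_h(x)‖₀ ≥ (1 − 1/ℓ)·‖x‖₀ ] ≥ 1 − 1/ℓ'. -/

import Mathlib

open Finset
open scoped Classical

private lemma drl_bucket_le {n m : ℕ} (x : Fin n → ℝ) (h : Fin n → Fin m) :
    (Finset.univ.filter (fun i : Fin m =>
      (∑ j ∈ Finset.univ.filter (fun j : Fin n => h j = i), x j) ≠ 0)).card ≤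
    (Finset.univ.filter (fun j : Fin n => x j ≠ 0)).card := by
  calc (Finset.univ.filter (fun i : Fin m =>
      (∑ j ∈ Finset.univ.filter (fun j : Fin n => h j = i), x j) ≠ 0)).card
      ≤ ((Finset.univ.filter (fun j : Fin n => x j ≠ 0)).image h).card := by
        apply Finset.card_le_card
        intro i hi
        simp only [mem_filter, mem_univ, true_and] at hi
        obtain ⟨j, hj, hxj⟩ := Finset.exists_ne_zero_of_sum_ne_zero hi
        simp only [mem_filter, mem_univ, true_and] at hj
        exact Finset.mem_image.2 ⟨j, by simp [hxj], hj⟩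
    _ ≤ _ := Finset.card_image_le

private lemma drl_iso_le {n m : ℕ} (x : Fin n → ℝ) (h : Fin n → Fin m) :
    ((Finset.univ.filter (fun j : Fin n => x j ≠ 0)).filter
      (fun j => ∀ j', x j' ≠ 0 → h j' = h j → j' = j)).card ≤
    (Finset.univ.filter (fun i : Fin m =>
      (∑ j ∈ Finset.univ.filter (fun j : Fin n => h j = i), x j) ≠ 0)).card := by
  apply Finset.card_le_card_of_injOn h
  · intro j hj
    simp only [mem_coe, mem_filter, mem_univ, true_and] at hj ⊢
    obtain ⟨hxj, hiso⟩ := hj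
    have : (∑ j' ∈ Finset.univ.filter (fun j' : Fin n => h j' = h j), x j') = x j := by
      apply Finset.sum_eq_single_of_mem j (by simp)
      intro b hb hbj
      by_contra hxb
      exact hbj (hiso b hxb (by simpa using hb))
    rw [this]; exact hxj
  · intro j hj j' hj' hhe
    simp only [coe_filter, Set.mem_setOf_eq, mem_univ, true_and, mem_filter] at hj hj'
    exact (hj.2 j' hj'.1 hhe.symm).symm

private lemma drl_pair_count {n m : ℕ} {j j' : Fin n} (hne : j ≠ j') :
    (Finset.univ.filter (fun h : Fin n → Fin m => h j' = h j)).card * m ≤ m ^ n := by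
  have key : ((Finset.univ.filter (fun h : Fin n → Fin m => h j' = h j)) ×ˢ
      (Finset.univ : Finset (Fin m))).card ≤ (Finset.univ : Finset (Fin n → Fin m)).card := by
    apply Finset.card_le_card_of_injOn (fun p => Function.update p.1 j' p.2)
    · intro p _; exact mem_univ _
    · intro p hp q hq heq
      simp only [coe_product, Set.mem_prod, mem_coe, mem_filter, mem_univ, true_and] at hp hq
      have h2 : p.2 = q.2 := by
        have := congrFun heq j'
        simpa using this
      have h1 : p.1 = q.1 := by
        funext k
        by_cases hk : k = j'
        · subst hk
          have hkj := congrFun heq j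
          simp only [Function.update_of_ne hne] at hkj
          rw [hp.1, hq.1, hkj]
        · have := congrFun heq k
          simpa only [Function.update_of_ne hk] using this
      exact Prod.ext h1 h2
  simpa [Finset.card_univ, Fintype.card_fun] using key

private lemma drl_collision_sum {n m : ℕ} (x : Fin n → ℝ) :
    m * ∑ h : Fin n → Fin m, ((Finset.univ.filter (fun j : Fin n => x j ≠ 0)).filter
      (fun j => ¬ ∀ j', x j' ≠ 0 → h j' = h j → j' = j)).card ≤
    (Finset.univ.filter (fun j : Fin n => x j ≠ 0)).card ^ 2 * m ^ n := by
  set S := Finset.univ.filter (fun j : Fin n => x j ≠ 0) with hS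
  have swap : ∑ h : Fin n → Fin m, (S.filter
        (fun j => ¬ ∀ j', x j' ≠ 0 → h j' = h j → j' = j)).card
      = ∑ j ∈ S, (Finset.univ.filter (fun h : Fin n → Fin m =>
        ¬ ∀ j', x j' ≠ 0 → h j' = h j → j' = j)).card := by
    simp only [Finset.card_filter]
    rw [Finset.sum_comm]
  rw [swap, Finset.mul_sum]
  have hbound : ∀ j ∈ S, m * (Finset.univ.filter (fun h : Fin n → Fin m =>
      ¬ ∀ j', x j' ≠ 0 → h j' = h j → j' = j)).card ≤ S.card * m ^ n := by
    intro j hj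
    have hsub : (Finset.univ.filter (fun h : Fin n → Fin m =>
        ¬ ∀ j', x j' ≠ 0 → h j' = h j → j' = j)) ⊆
        (S.erase j).biUnion (fun j' => Finset.univ.filter (fun h : Fin n → Fin m => h j' = h j)) := by
      intro h hh
      simp only [mem_filter, mem_univ, true_and] at hh
      push_neg at hh
      obtain ⟨j', hx', hhe, hne⟩ := hh
      refine Finset.mem_biUnion.2 ⟨j', ?_, ?_⟩
      · exact Finset.mem_erase.2 ⟨hne, by simp [hS, hx']⟩
      · simp [hhe]
    calc m * (Finset.univ.filter (fun h : Fin n → Fin m =>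
          ¬ ∀ j', x j' ≠ 0 → h j' = h j → j' = j)).card
        ≤ m * ((S.erase j).biUnion (fun j' =>
            Finset.univ.filter (fun h : Fin n → Fin m => h j' = h j))).card :=
          Nat.mul_le_mul_left m (Finset.card_le_card hsub)
      _ ≤ m * ∑ j' ∈ S.erase j, (Finset.univ.filter
            (fun h : Fin n → Fin m => h j' = h j)).card :=
          Nat.mul_le_mul_left m Finset.card_biUnion_le
      _ = ∑ j' ∈ S.erase j, (Finset.univ.filter
            (fun h : Fin n → Fin m => h j' = h j)).card * m := by
          rw [Finset.mul_sum]
          exact Finset.sum_congr rfl (fun _ _ => Nat.mul_comm _ _)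
      _ ≤ ∑ j' ∈ S.erase j, m ^ n := by
          apply Finset.sum_le_sum
          intro j' hj'
          exact drl_pair_count (fun e => (Finset.mem_erase.1 hj').1 e.symm)
      _ = (S.erase j).card * m ^ n := by rw [Finset.sum_const, smul_eq_mul]
      _ ≤ S.card * m ^ n := Nat.mul_le_mul_right _ (Finset.card_le_card (Finset.erase_subset _ _))
  calc ∑ j ∈ S, m * (Finset.univ.filter (fun h : Fin n → Fin m =>
        ¬ ∀ j', x j' ≠ 0 → h j' = h j → j' = j)).card
      ≤ ∑ j ∈ S, S.card * m ^ n := Finset.sum_le_sum hbound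
    _ = S.card ^ 2 * m ^ n := by rw [Finset.sum_const, smul_eq_mul]; ring

theorem stmt2 (n m : ℕ) (hn : 1 ≤ n) (hm : 1 ≤ m) (ℓ ℓ' : ℝ) (hℓ : 1 ≤ ℓ) (hℓ' : 1 ≤ ℓ')
    (x : Fin n → ℝ)
    (hcard : ((Finset.univ.filter (fun j : Fin n => x j ≠ 0)).card : ℝ) * ℓ * ℓ' ≤ (m : ℝ)) :
    1 - 1 / ℓ' ≤
      ((Finset.univ.filter (fun h : Fin n → Fin m =>
          ((Finset.univ.filter (fun i : Fin m =>
              (∑ j ∈ Finset.univ.filter (fun j : Fin n => h j = i), x j) ≠ 0)).card : ℝ)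
            ≤ ((Finset.univ.filter (fun j : Fin n => x j ≠ 0)).card : ℝ) ∧
          (1 - 1 / ℓ) * ((Finset.univ.filter (fun j : Fin n => x j ≠ 0)).card : ℝ) ≤
            ((Finset.univ.filter (fun i : Fin m =>
              (∑ j ∈ Finset.univ.filter (fun j : Fin n => h j = i), x j) ≠ 0)).card : ℝ))).card : ℝ) /
        (Fintype.card (Fin n → Fin m) : ℝ) := by
  classical
  have hℓpos : (0:ℝ) < ℓ := lt_of_lt_of_le one_pos hℓ
  have hℓ'pos : (0:ℝ) < ℓ' := lt_of_lt_of_le one_pos hℓ'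
  have hmpos : (0:ℝ) < m := by exact_mod_cast hm
  have hNcard : (Fintype.card (Fin n → Fin m) : ℝ) = ((m ^ n : ℕ) : ℝ) := by
    simp [Fintype.card_fun]
  have hNpos : (0:ℝ) < ((m ^ n : ℕ) : ℝ) := by
    have : 0 < m ^ n := Nat.pow_pos hm
    exact_mod_cast this
  -- notation
  set S := Finset.univ.filter (fun j : Fin n => x j ≠ 0) with hS
  set Bc : (Fin n → Fin m) → ℕ := fun h => (Finset.univ.filter (fun i : Fin m =>
      (∑ j ∈ Finset.univ.filter (fun j : Fin n => h j = i), x j) ≠ 0)).card with hBc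
  -- first conjunct is always true
  have hfilter : (Finset.univ.filter (fun h : Fin n → Fin m =>
        ((Bc h : ℝ) ≤ (S.card : ℝ)) ∧ ((1 - 1 / ℓ) * (S.card : ℝ) ≤ (Bc h : ℝ))))
      = Finset.univ.filter (fun h : Fin n → Fin m =>
        (1 - 1 / ℓ) * (S.card : ℝ) ≤ (Bc h : ℝ)) := by
    apply Finset.filter_congr
    intro h _
    have hb : Bc h ≤ S.card := drl_bucket_le x h
    constructor
    · rintro ⟨_, hq⟩; exact hq
    · intro hq; exact ⟨by exact_mod_cast hb, hq⟩
  rw [hfilter, hNcard]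
  set Q : (Fin n → Fin m) → Prop :=
    fun h => (1 - 1 / ℓ) * (S.card : ℝ) ≤ (Bc h : ℝ) with hQ
  set G := Finset.univ.filter Q with hG
  set F := Finset.univ.filter (fun h => ¬ Q h) with hF
  have hGF : G.card + F.card = m ^ n := by
    rw [hG, hF, Finset.card_filter_add_card_filter_not]
    simp [Finset.card_univ, Fintype.card_fun]
  -- bound on F
  have hFbound : (F.card : ℝ) * ℓ' ≤ ((m ^ n : ℕ) : ℝ) := by
    rcases Nat.eq_zero_or_pos S.card with hs0 | hspos
    · -- support empty : F is empty
      have : F = ∅ := by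
        rw [hF]
        apply Finset.filter_false_of_mem
        intro h _
        rw [hQ]
        push_neg
        rw [hs0]
        simp
      rw [this]
      simp only [Finset.card_empty, Nat.cast_zero, zero_mul]
      exact le_of_lt hNpos
    · have hsposR : (0:ℝ) < (S.card : ℝ) := by exact_mod_cast hspos
      -- collision counts
      set Dc : (Fin n → Fin m) → ℕ := fun h => (S.filter
          (fun j => ¬ ∀ j', x j' ≠ 0 → h j' = h j → j' = j)).card with hDc
      have hkey : ∀ h ∈ F, (S.card : ℝ) ≤ ℓ * (Dc h : ℝ) := by
        intro h hh
        rw [hF, Finset.mem_filter] at hh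
        have hq : (Bc h : ℝ) < (1 - 1 / ℓ) * (S.card : ℝ) := not_le.mp hh.2
        have hsplit : (S.filter (fun j => ∀ j', x j' ≠ 0 → h j' = h j → j' = j)).card
            + Dc h = S.card := by
          rw [hDc]
          exact Finset.card_filter_add_card_filter_not _
        have hiso : (S.filter (fun j => ∀ j', x j' ≠ 0 → h j' = h j → j' = j)).card ≤ Bc h :=
          drl_iso_le x h
        have h1 : (S.card : ℝ) - (Dc h : ℝ) ≤ (Bc h : ℝ) := by
          have := hsplit
          have hc : ((S.filter (fun j => ∀ j', x j' ≠ 0 → h j' = h j → j' = j)).card : ℝ)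
              + (Dc h : ℝ) = (S.card : ℝ) := by exact_mod_cast this
          have hc2 : ((S.filter (fun j => ∀ j', x j' ≠ 0 → h j' = h j → j' = j)).card : ℝ)
              ≤ (Bc h : ℝ) := by exact_mod_cast hiso
          linarith
        -- s - D ≤ B < (1 - 1/ℓ) s  ⟹  s/ℓ < D ⟹ s ≤ ℓ D
        have h2 : (S.card : ℝ) / ℓ < (Dc h : ℝ) := by
          have : (1 - 1 / ℓ) * (S.card : ℝ) = (S.card : ℝ) - (S.card : ℝ) / ℓ := by
            field_simp
          linarith
        calc (S.card : ℝ) = ℓ * ((S.card : ℝ) / ℓ) := by field_simp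
          _ ≤ ℓ * (Dc h : ℝ) := by
              apply mul_le_mul_of_nonneg_left (le_of_lt h2) (le_of_lt hℓpos)
      -- sum over F
      have hsum1 : (S.card : ℝ) * (F.card : ℝ) ≤ ℓ * ∑ h ∈ F, (Dc h : ℝ) := by
        calc (S.card : ℝ) * (F.card : ℝ) = ∑ _h ∈ F, (S.card : ℝ) := by
              rw [Finset.sum_const, nsmul_eq_mul]; ring
          _ ≤ ∑ h ∈ F, ℓ * (Dc h : ℝ) := Finset.sum_le_sum hkey
          _ = ℓ * ∑ h ∈ F, (Dc h : ℝ) := by rw [Finset.mul_sum]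
      have hsum2 : ∑ h ∈ F, (Dc h : ℝ) ≤ ∑ h : Fin n → Fin m, (Dc h : ℝ) := by
        apply Finset.sum_le_sum_of_subset_of_nonneg (Finset.filter_subset _ _)
        intro h _ _
        positivity
      have hsum3 : (m : ℝ) * ∑ h : Fin n → Fin m, (Dc h : ℝ)
          ≤ ((S.card : ℝ)) ^ 2 * ((m ^ n : ℕ) : ℝ) := by
        simp only [hDc, hS]
        exact_mod_cast drl_collision_sum x
      have hTnonneg : 0 ≤ ∑ h : Fin n → Fin m, (Dc h : ℝ) :=
        Finset.sum_nonneg fun _ _ => Nat.cast_nonneg _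
      have hs0' : (0:ℝ) ≤ (S.card : ℝ) := Nat.cast_nonneg _
      have hF0 : (0:ℝ) ≤ (F.card : ℝ) := Nat.cast_nonneg _
      have e1 : (m : ℝ) * ((S.card : ℝ) * (F.card : ℝ))
          ≤ ℓ * ((S.card : ℝ) ^ 2 * ((m ^ n : ℕ) : ℝ)) := by
        calc (m : ℝ) * ((S.card : ℝ) * (F.card : ℝ))
            ≤ (m : ℝ) * (ℓ * ∑ h : Fin n → Fin m, (Dc h : ℝ)) := by
              refine mul_le_mul_of_nonneg_left ?_ (le_of_lt hmpos)
              calc (S.card : ℝ) * (F.card : ℝ) ≤ ℓ * ∑ h ∈ F, (Dc h : ℝ) := hsum1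
                _ ≤ ℓ * ∑ h : Fin n → Fin m, (Dc h : ℝ) :=
                    mul_le_mul_of_nonneg_left hsum2 (le_of_lt hℓpos)
          _ = ℓ * ((m : ℝ) * ∑ h : Fin n → Fin m, (Dc h : ℝ)) := by ring
          _ ≤ ℓ * ((S.card : ℝ) ^ 2 * ((m ^ n : ℕ) : ℝ)) :=
              mul_le_mul_of_nonneg_left hsum3 (le_of_lt hℓpos)
      have e2 : ((S.card : ℝ) * ℓ * ℓ') * ((S.card : ℝ) * (F.card : ℝ))
          ≤ (m : ℝ) * ((S.card : ℝ) * (F.card : ℝ)) :=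
        mul_le_mul_of_nonneg_right hcard (mul_nonneg hs0' hF0)
      have e3 : (ℓ * (S.card : ℝ) ^ 2) * (ℓ' * (F.card : ℝ))
          ≤ (ℓ * (S.card : ℝ) ^ 2) * ((m ^ n : ℕ) : ℝ) := by
        calc (ℓ * (S.card : ℝ) ^ 2) * (ℓ' * (F.card : ℝ))
            = ((S.card : ℝ) * ℓ * ℓ') * ((S.card : ℝ) * (F.card : ℝ)) := by ring
          _ ≤ (m : ℝ) * ((S.card : ℝ) * (F.card : ℝ)) := e2
          _ ≤ ℓ * ((S.card : ℝ) ^ 2 * ((m ^ n : ℕ) : ℝ)) := e1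
          _ = (ℓ * (S.card : ℝ) ^ 2) * ((m ^ n : ℕ) : ℝ) := by ring
      have hpos : (0:ℝ) < ℓ * (S.card : ℝ) ^ 2 := mul_pos hℓpos (pow_pos hsposR 2)
      have e4 : ℓ' * (F.card : ℝ) ≤ ((m ^ n : ℕ) : ℝ) := le_of_mul_le_mul_left e3 hpos
      calc (F.card : ℝ) * ℓ' = ℓ' * (F.card : ℝ) := mul_comm _ _
        _ ≤ ((m ^ n : ℕ) : ℝ) := e4
  -- finish
  have hGR : (G.card : ℝ) = ((m ^ n : ℕ) : ℝ) - (F.card : ℝ) := by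
    have h' : (G.card : ℝ) + (F.card : ℝ) = ((m ^ n : ℕ) : ℝ) := by exact_mod_cast hGF
    linarith
  rw [le_div_iff₀ hNpos, hGR]
  have hFle : (F.card : ℝ) ≤ ((m ^ n : ℕ) : ℝ) / ℓ' := by
    rw [le_div_iff₀ hℓ'pos]
    exact hFbound
  have hexp : (1 - 1 / ℓ') * ((m ^ n : ℕ) : ℝ)
      = ((m ^ n : ℕ) : ℝ) - ((m ^ n : ℕ) : ℝ) / ℓ' := by
    field_simp
  linarith
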